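/- Let U be an open subset of ℂⁿ, let h : U → ℂ be holomorphic, and let x ∈ U satisfy h(x) ≠ 0 and fderiv ℂ h x = 0. Suppose the complex Hessian of h at x, i.e. the continuous ℂ-linear map H : ℂⁿ → (ℂⁿ →L[ℂ] ℂ) obtained as the complex Fréchet derivative at x of the map z ↦ fderiv ℂ h z, is bijective. Then, regarding |h| as a real-valued function on U ⊆ ℝ^{2n}: x is a critical point of |h|; the real Hessian bilinear form B of |h| at x (the second real Fréchet derivative at x) is nondegenerate; and there exist real subspaces P and N of ℝ^{2n} with dim P = dim N = n, ℝ^{2n} = P ⊕ N, such that B is positive definite on P and negative definite on N. In other words, x is a nondegenerate real critical point of |h| of Morse index n. -/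

import Mathlib

open Complex Metric Set Filter

noncomputable def absD (c : ℂ) : ℂ →L[ℝ] ℝ :=
  ‖c‖⁻¹ • (Complex.reCLM.comp ((ContinuousLinearMap.mul ℝ ℂ) ((starRingEnd ℂ) c)))

lemma absD_apply (c v : ℂ) : absD c v = ‖c‖⁻¹ * ((starRingEnd ℂ) c * v).re := rfl

lemma hasFDerivAt_cabs {c : ℂ} (hc : c ≠ 0) :
    HasFDerivAt (fun z => ‖z‖) (absD c) c := by
  have hns : Complex.normSq c ≠ 0 := by
    simpa [Complex.normSq_eq_zero] using hc
  have h1 : HasFDerivAt (fun z : ℂ => Complex.normSq z)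
      ((c.re • Complex.reCLM + c.re • Complex.reCLM) +
        (c.im • Complex.imCLM + c.im • Complex.imCLM)) c := by
    have := ((Complex.reCLM.hasFDerivAt (x := c)).mul (Complex.reCLM.hasFDerivAt (x := c))).add
      ((Complex.imCLM.hasFDerivAt (x := c)).mul (Complex.imCLM.hasFDerivAt (x := c)))
    refine this.congr_of_eventuallyEq (Eventually.of_forall fun z => ?_)
    simp [Complex.normSq_apply]
  have h2 := (Real.hasDerivAt_sqrt hns).comp_hasFDerivAt c h1
  have heq : (fun z : ℂ => ‖z‖) = fun z => Real.sqrt (Complex.normSq z) := by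
    funext z; rw [Complex.norm_def]
  rw [heq]
  refine h2.congr_fderiv ?_
  have hsq : Real.sqrt (Complex.normSq c) = ‖c‖ := by
    rw [← Complex.norm_def]
  have hn : ‖c‖ ≠ 0 := norm_ne_zero_iff.mpr hc
  ext v
  simp only [absD_apply, ContinuousLinearMap.coe_smul', Pi.smul_apply,
    ContinuousLinearMap.add_apply, ContinuousLinearMap.coe_comp', Function.comp_apply,
    Complex.reCLM_apply, Complex.imCLM_apply, smul_eq_mul, hsq, Complex.mul_re,
    Complex.conj_re, Complex.conj_im]
  field_simp
  ring

noncomputable def Tmap : ℂ →L[ℝ] (ℂ →L[ℝ] ℝ) :=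
  (((ContinuousLinearMap.compL ℝ ℂ ℂ ℝ) Complex.reCLM).comp
    (ContinuousLinearMap.mul ℝ ℂ)).comp (Complex.conjCLE.toContinuousLinearMap)

lemma absD_eq (c : ℂ) : absD c = ‖c‖⁻¹ • Tmap c := rfl

lemma differentiableAt_absD {c : ℂ} (hc : c ≠ 0) :
    DifferentiableAt ℝ (fun w => absD w) c := by
  have h1 : DifferentiableAt ℝ (fun w : ℂ => ‖w‖⁻¹) c :=
    (differentiableAt_id.norm ℝ hc).inv (norm_ne_zero_iff.mpr hc)
  have h2 : DifferentiableAt ℝ (fun w : ℂ => Tmap w) c := Tmap.differentiableAt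
  simp only [absD_eq]; exact h1.smul h2


open MeasureTheory intervalIntegral


section
variable {n : ℕ}

-- Cauchy bound for the derivative
lemma cauchy_opnorm_bound {U : Set (Fin n → ℂ)} (hU : IsOpen U)
    {h : (Fin n → ℂ) → ℂ} (hh : DifferentiableOn ℂ h U)
    {x : Fin n → ℂ} {ρ K : ℝ} (hρ : 0 < ρ) (hsub : closedBall x ρ ⊆ U)
    (hK : ∀ y ∈ closedBall x ρ, ‖h y‖ ≤ K) :
    ∀ z ∈ ball x (ρ/2), ‖fderiv ℂ h z‖ ≤ 2 * K / ρ := by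
  have hK0 : 0 ≤ K := le_trans (norm_nonneg _) (hK x (mem_closedBall_self hρ.le))
  intro z hz
  refine ContinuousLinearMap.opNorm_le_bound _ (by positivity) fun v => ?_
  rcases eq_or_ne v 0 with rfl | hv
  · simp
  · have hvn : 0 < ‖v‖ := norm_pos_iff.mpr hv
    set R' : ℝ := (ρ/2) / ‖v‖ with hR'
    have hR'0 : 0 < R' := by positivity
    set g : ℂ → ℂ := fun ζ => h (z + ζ • v) with hg
    have hmem : ∀ ζ : ℂ, ‖ζ‖ ≤ R' → z + ζ • v ∈ ball x ρ := by
      intro ζ hζ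
      have : ‖z + ζ • v - x‖ ≤ ‖z - x‖ + ‖ζ‖ * ‖v‖ := by
        calc ‖z + ζ • v - x‖ = ‖(z - x) + ζ • v‖ := by ring_nf
          _ ≤ ‖z - x‖ + ‖ζ • v‖ := norm_add_le _ _
          _ = ‖z - x‖ + ‖ζ‖ * ‖v‖ := by rw [norm_smul]
      have h1 : ‖ζ‖ * ‖v‖ ≤ ρ/2 := by
        rw [hR'] at hζ
        calc ‖ζ‖ * ‖v‖ ≤ ((ρ/2)/‖v‖) * ‖v‖ := by
              exact mul_le_mul_of_nonneg_right hζ hvn.le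
          _ = ρ/2 := by field_simp
      have h2 : ‖z - x‖ < ρ/2 := mem_ball_iff_norm.mp hz
      exact mem_ball_iff_norm.mpr (lt_of_le_of_lt this (by linarith))
    have hgd : DifferentiableOn ℂ g (closedBall 0 R') := by
      intro ζ hζ
      have hmemU : z + ζ • v ∈ U :=
        hsub (ball_subset_closedBall (hmem ζ (by simpa using hζ)))
      have hd1 : DifferentiableAt ℂ h (z + ζ • v) := hh.differentiableAt (hU.mem_nhds hmemU)
      exact (hd1.comp ζ ((differentiableAt_id.smul_const v).const_add z)).differentiableWithinAt
    have hdc : DiffContOnCl ℂ g (ball 0 R') :=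
      (hgd.mono closure_ball_subset_closedBall).diffContOnCl
    have hC : ∀ ζ ∈ sphere (0:ℂ) R', ‖g ζ‖ ≤ K := by
      intro ζ hζ
      have : ‖ζ‖ = R' := by simpa using hζ
      exact hK _ (ball_subset_closedBall (hmem ζ this.le))
    have hder : HasDerivAt g (fderiv ℂ h z v) 0 := by
      have hA : HasDerivAt (fun ζ : ℂ => z + ζ • v) v 0 := by
        simpa using ((hasDerivAt_id (0:ℂ)).smul_const v).const_add z
      have hmemU : z + (0:ℂ) • v ∈ U := by
        simpa using hsub (ball_subset_closedBall (hmem 0 (by simp [hR'0.le])))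
      have hfd : HasFDerivAt h (fderiv ℂ h z) ((fun ζ : ℂ => z + ζ • v) 0) := by
        simpa using (hh.differentiableAt (hU.mem_nhds (by simpa using hmemU))).hasFDerivAt
      exact hfd.comp_hasDerivAt 0 hA
    have hb := Complex.norm_deriv_le_of_forall_mem_sphere_norm_le hR'0 hdc hC
    rw [hder.deriv] at hb
    calc ‖fderiv ℂ h z v‖ ≤ K / R' := hb
      _ = 2 * K / ρ * ‖v‖ := by rw [hR']; field_simp
end

section
variable {n : ℕ}

lemma key_diff {U : Set (Fin n → ℂ)} (hU : IsOpen U)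
    {h : (Fin n → ℂ) → ℂ} (hh : DifferentiableOn ℂ h U)
    {x : Fin n → ℂ} (hx : x ∈ U) :
    DifferentiableAt ℂ (fun z => fderiv ℂ h z) x := by
  set E : Fin n → (Fin n → ℂ) := fun k => Pi.single k (1:ℂ) with hE
  -- choose a closed ball inside U
  obtain ⟨ρ, hρ, hsub⟩ : ∃ ρ > 0, closedBall x ρ ⊆ U := by
    rcases Metric.isOpen_iff.mp hU x hx with ⟨ε, hε, hb⟩
    exact ⟨ε/2, by linarith, (closedBall_subset_ball (by linarith)).trans hb⟩
  obtain ⟨K, hK⟩ : ∃ K, ∀ y ∈ closedBall x ρ, ‖h y‖ ≤ K :=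
    (isCompact_closedBall x ρ).exists_bound_of_continuousOn
      (hh.continuousOn.mono hsub)
  set M : ℝ := 2 * K / ρ with hM
  have hbound := cauchy_opnorm_bound hU hh hρ hsub hK
  have hK0 : 0 ≤ K := le_trans (norm_nonneg _) (hK x (mem_closedBall_self hρ.le))
  have hM0 : 0 ≤ M := by positivity
  set r : ℝ := ρ/8 with hr
  have hr0 : 0 < r := by positivity
  have hε0 : 0 < r := hr0
  -- membership facts
  have hball : ∀ (k : Fin n) (z : Fin n → ℂ), z ∈ ball x r → ∀ ζ : ℂ, ‖ζ‖ ≤ r →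
      z + ζ • E k ∈ ball x (ρ/2) := by
    intro k z hz ζ hζ
    have hek : ‖E k‖ ≤ 1 := by
      refine (pi_norm_le_iff_of_nonneg zero_le_one).mpr fun j => ?_
      rcases eq_or_ne j k with rfl | hj
      · simp [hE]
      · simp [hE, Pi.single_eq_of_ne hj]
    have hle : ‖z + ζ • E k - x‖ ≤ ‖z - x‖ + ‖ζ‖ * ‖E k‖ := by
      calc ‖z + ζ • E k - x‖ = ‖(z - x) + ζ • E k‖ := by ring_nf
        _ ≤ ‖z - x‖ + ‖ζ • E k‖ := norm_add_le _ _
        _ = ‖z - x‖ + ‖ζ‖ * ‖E k‖ := by rw [norm_smul]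
    have h2 : ‖z - x‖ < r := mem_ball_iff_norm.mp hz
    have h3 : ‖ζ‖ * ‖E k‖ ≤ r * 1 :=
      mul_le_mul hζ hek (norm_nonneg _) hr0.le
    refine mem_ball_iff_norm.mpr (lt_of_le_of_lt hle ?_)
    rw [hr] at h2 h3; linarith
  have hUball : ball x (ρ/2) ⊆ U := fun y hy =>
    hsub (ball_subset_closedBall (ball_subset_ball (by linarith) hy))
  have hdAt : ∀ y ∈ ball x (ρ/2), DifferentiableAt ℂ h y := fun y hy =>
    hh.differentiableAt (hU.mem_nhds (hUball hy))
  have hrball : ball x r ⊆ ball x (ρ/2) := ball_subset_ball (by rw [hr]; linarith)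
  -- for each coordinate k, z ↦ fderiv ℂ h z (E k) is differentiable at x
  have hcoord : ∀ k : Fin n,
      DifferentiableAt ℂ (fun z => fderiv ℂ h z (E k)) x := by
    intro k
    -- Cauchy representation on ball x r
    have hrep : ∀ z ∈ ball x r, fderiv ℂ h z (E k) =
        (2 * Real.pi * I : ℂ)⁻¹ • ∮ ζ in C(0, r), (ζ - 0) ^ (-2 : ℤ) • h (z + ζ • E k) := by
      intro z hz
      set g : ℂ → ℂ := fun ζ => h (z + ζ • E k) with hg
      have hgd : DifferentiableOn ℂ g (closedBall 0 r) := by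
        intro ζ hζ
        have : z + ζ • E k ∈ U := hUball (hball k z hz ζ (by simpa using hζ))
        exact ((hh.differentiableAt (hU.mem_nhds this)).comp ζ
          ((differentiableAt_id.smul_const (E k)).const_add z)).differentiableWithinAt
      have hdc : DiffContOnCl ℂ g (ball 0 r) :=
        (hgd.mono closure_ball_subset_closedBall).diffContOnCl
      have hder : HasDerivAt g (fderiv ℂ h z (E k)) 0 := by
        have hA : HasDerivAt (fun ζ : ℂ => z + ζ • E k) (E k) 0 := by
          simpa using ((hasDerivAt_id (0:ℂ)).smul_const (E k)).const_add z
        have hfd : HasFDerivAt h (fderiv ℂ h z) ((fun ζ : ℂ => z + ζ • E k) 0) := by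
          simpa using (hdAt z (hrball hz)).hasFDerivAt
        exact hfd.comp_hasDerivAt 0 hA
      rw [← hder.deriv]
      have hcf := hdc.deriv_eq_smul_circleIntegral hr0
      have hI : (2 * Real.pi * I : ℂ) ≠ 0 := by simp [Real.pi_ne_zero, I_ne_zero]
      have hfun : (∮ ζ in C(0, r), (ζ - 0) ^ (-2 : ℤ) • h (z + ζ • E k))
          = ∮ ζ in C(0, r), (1 / (ζ - 0) ^ 2) • g ζ := by
        congr 1; funext ζ; simp [hg, zpow_neg, zpow_two]
      rw [hfun, hcf, smul_smul, inv_mul_cancel₀ hI, one_smul]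
    -- differentiate under the integral sign
    set F : (Fin n → ℂ) → ℝ → ℂ := fun z θ =>
      deriv (circleMap 0 r) θ • (((circleMap 0 r θ) - 0) ^ (-2 : ℤ) • h (z + circleMap 0 r θ • E k))
      with hF
    set F' : (Fin n → ℂ) → ℝ → ((Fin n → ℂ) →L[ℂ] ℂ) := fun z θ =>
      (deriv (circleMap 0 r) θ * ((circleMap 0 r θ) - 0) ^ (-2 : ℤ)) •
        fderiv ℂ h (z + circleMap 0 r θ • E k) with hF'
    have hcm_ne : ∀ θ : ℝ, circleMap 0 r θ ≠ 0 := fun θ => circleMap_ne_center hr0.ne'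
    have hcm_norm : ∀ θ : ℝ, ‖circleMap 0 r θ‖ = r := fun θ => by
      rw [norm_circleMap_zero, abs_of_pos hr0]
    -- continuity of θ ↦ F z θ for z in ball x r
    have hFcont : ∀ z ∈ ball x r, Continuous (F z) := by
      intro z hz
      have hc1 : Continuous fun θ => deriv (circleMap 0 r) θ := by
        simp only [deriv_circleMap]; exact (continuous_circleMap 0 r).mul continuous_const
      have hc2 : Continuous fun θ => ((circleMap 0 r θ) - (0:ℂ)) ^ (-2 : ℤ) := by
        apply Continuous.zpow₀ ((continuous_circleMap 0 r).sub continuous_const)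
        intro θ; left; simpa using hcm_ne θ
      have hc3 : Continuous fun θ => h (z + circleMap 0 r θ • E k) := by
        refine hh.continuousOn.comp_continuous
          (continuous_const.add ((continuous_circleMap 0 r).smul continuous_const)) fun θ => ?_
        exact hUball (hball k z hz (circleMap 0 r θ) (by rw [hcm_norm θ]))
      exact hc1.smul (hc2.smul hc3)
    have hmain := intervalIntegral.hasFDerivAt_integral_of_dominated_of_fderiv_le
      (𝕜 := ℂ) (μ := volume) (F := F) (F' := F') (x₀ := x) (a := 0) (b := 2 * Real.pi)
      (bound := fun _ => M / r) (ball_mem_nhds x hε0)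
      (by
        filter_upwards [ball_mem_nhds x hε0] with z hz
        exact (hFcont z hz).aestronglyMeasurable)
      ((hFcont x (mem_ball_self hε0)).intervalIntegrable 0 (2 * Real.pi))
      (by
        -- measurability of F' x
        have hm1 : StronglyMeasurable fun θ => fderiv ℂ h (x + circleMap 0 r θ • E k) :=
          ((measurable_fderiv ℂ h).comp
            ((continuous_const.add ((continuous_circleMap 0 r).smul
              continuous_const)).measurable)).stronglyMeasurable
        have hm2 : StronglyMeasurable fun θ : ℝ =>
            (deriv (circleMap 0 r) θ * ((circleMap 0 r θ) - 0) ^ (-2 : ℤ)) := by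
          apply Continuous.stronglyMeasurable
          simp only [deriv_circleMap]
          exact ((continuous_circleMap 0 r).mul continuous_const).mul
            (Continuous.zpow₀ ((continuous_circleMap 0 r).sub continuous_const) _
              (fun θ => Or.inl (by simpa using hcm_ne θ)))
        exact (hm2.smul hm1).aestronglyMeasurable)
      (by
        refine ae_of_all _ fun θ _ z hz => ?_
        have hzmem : z + circleMap 0 r θ • E k ∈ ball x (ρ/2) :=
          hball k z hz (circleMap 0 r θ) (by rw [hcm_norm θ])
        rw [hF']
        have hb := hbound _ hzmem
        have hrne : (r:ℝ) ≠ 0 := hr0.ne'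
        calc ‖(deriv (circleMap 0 r) θ * ((circleMap 0 r θ) - 0) ^ (-2 : ℤ)) •
              fderiv ℂ h (z + circleMap 0 r θ • E k)‖
            = ‖deriv (circleMap 0 r) θ‖ * ‖((circleMap 0 r θ) - 0) ^ (-2 : ℤ)‖ *
              ‖fderiv ℂ h (z + circleMap 0 r θ • E k)‖ := by
              rw [norm_smul, norm_mul]
          _ ≤ r * (r ^ (-2 : ℤ)) * M := by
              have h1 : ‖deriv (circleMap 0 r) θ‖ = r := by
                rw [deriv_circleMap, norm_mul, hcm_norm θ]; simp
              have h2 : ‖((circleMap 0 r θ) - 0) ^ (-2 : ℤ)‖ = r ^ (-2 : ℤ) := by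
                rw [norm_zpow]; simp [hcm_norm θ]
              rw [h1, h2]
              exact mul_le_mul_of_nonneg_left hb (by positivity)
          _ = M / r := by
              rw [zpow_neg, zpow_two, mul_inv, ← mul_assoc, mul_inv_cancel₀ hrne, one_mul,
                div_eq_mul_inv, mul_comm])
      (intervalIntegrable_const)
      (by
        refine ae_of_all _ fun θ _ z hz => ?_
        have hzmem : z + circleMap 0 r θ • E k ∈ ball x (ρ/2) :=
          hball k z hz (circleMap 0 r θ) (by rw [hcm_norm θ])
        have hbase : HasFDerivAt (fun w => h (w + circleMap 0 r θ • E k))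
            (fderiv ℂ h (z + circleMap 0 r θ • E k)) z := by
          have h1 : HasFDerivAt (fun w : Fin n → ℂ => w + circleMap 0 r θ • E k)
              (ContinuousLinearMap.id ℂ _) z := (hasFDerivAt_id z).add_const _
          have h2 := (hdAt _ hzmem).hasFDerivAt
          have := h2.comp z h1
          exact this
        have hres := (hbase.const_smul (((circleMap 0 r θ) - 0) ^ (-2 : ℤ))).const_smul
          (deriv (circleMap 0 r) θ)
        rw [hF, hF']
        convert hres using 1
        · funext w; simp only [Pi.smul_apply, smul_smul]
        · simp only [smul_smul])
    -- now transfer back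
    have hInt : HasFDerivAt (fun z => ∫ θ in (0:ℝ)..(2 * Real.pi), F z θ)
        (∫ θ in (0:ℝ)..(2 * Real.pi), F' x θ) x := hmain
    have hEq : (fun z => fderiv ℂ h z (E k)) =ᶠ[nhds x]
        (fun z => (2 * Real.pi * I : ℂ)⁻¹ • ∫ θ in (0:ℝ)..(2 * Real.pi), F z θ) := by
      filter_upwards [ball_mem_nhds x hε0] with z hz
      rw [hrep z hz]
      rfl
    exact (hEq.differentiableAt_iff).mpr (hInt.differentiableAt.fun_const_smul _)
  -- assemble: fderiv ℂ h z = ∑ k, (proj k).smulRight (fderiv ℂ h z (E k))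
  have hasm : (fun z => fderiv ℂ h z) =ᶠ[nhds x] (fun z => ∑ k : Fin n,
      (ContinuousLinearMap.proj (R := ℂ) (φ := fun _ : Fin n => ℂ) k).smulRight
        (fderiv ℂ h z (E k))) := by
    filter_upwards [hU.mem_nhds hx] with z hz
    ext v
    have hv : v = ∑ j : Fin n, v j • E j := by
      funext i
      rw [Finset.sum_apply]
      simp [hE, Pi.single_apply]
    conv_lhs => rw [hv]
    rw [map_sum]
    simp only [_root_.map_smul, ContinuousLinearMap.sum_apply, ContinuousLinearMap.smulRight_apply,
      ContinuousLinearMap.proj_apply, smul_eq_mul]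
  refine (hasm.differentiableAt_iff).mpr ?_
  apply DifferentiableAt.fun_sum
  intro k _
  exact ((ContinuousLinearMap.smulRightL ℂ (Fin n → ℂ) ℂ
    (ContinuousLinearMap.proj k)).differentiableAt).comp x (hcoord k)
end


open ContinuousLinearMap Module

set_option maxHeartbeats 2000000 in


/-- If `h` is holomorphic on an open `U ⊆ ℂⁿ`, `x ∈ U`, `h x ≠ 0`,
`x` is a critical point of `h`, and the complex Hessian of `h` at `x` is bijective,
then `x` is a critical point of `|h|` (as a real function), the real Hessian
bilinear form of `|h|` at `x` is nondegenerate, and it splits into an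
`n`-dimensional positive definite subspace and an `n`-dimensional negative
definite subspace: `x` is a nondegenerate critical point of `|h|` of Morse index `n`. -/
theorem stmt_1 {n : ℕ} {U : Set (Fin n → ℂ)} (hU : IsOpen U)
    {h : (Fin n → ℂ) → ℂ} (hh : DifferentiableOn ℂ h U)
    {x : Fin n → ℂ} (hx : x ∈ U) (hne : h x ≠ 0)
    (hcrit : fderiv ℂ h x = 0)
    (hHess : Function.Bijective (fderiv ℂ (fun z => fderiv ℂ h z) x)) :
    fderiv ℝ (fun z => ‖h z‖) x = 0 ∧
    (∀ v : Fin n → ℂ,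
        (∀ w : Fin n → ℂ,
          fderiv ℝ (fun z => fderiv ℝ (fun y => ‖h y‖) z) x v w = 0) → v = 0) ∧
    ∃ P N : Submodule ℝ (Fin n → ℂ),
      Module.finrank ℝ P = n ∧ Module.finrank ℝ N = n ∧ IsCompl P N ∧
      (∀ v ∈ P, v ≠ 0 →
        0 < fderiv ℝ (fun z => fderiv ℝ (fun y => ‖h y‖) z) x v v) ∧
      (∀ v ∈ N, v ≠ 0 →
        fderiv ℝ (fun z => fderiv ℝ (fun y => ‖h y‖) z) x v v < 0) := by
  classical
  set c : ℂ := h x with hc_def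
  have hdx : DifferentiableAt ℂ h x := hh.differentiableAt (hU.mem_nhds hx)
  set H : (Fin n → ℂ) →L[ℂ] ((Fin n → ℂ) →L[ℂ] ℂ) := fderiv ℂ (fun z => fderiv ℂ h z) x with hH_def
  have hHd : DifferentiableAt ℂ (fun z => fderiv ℂ h z) x := key_diff hU hh hx
  have hHf : HasFDerivAt (fun z => fderiv ℂ h z) H x := hHd.hasFDerivAt
  have hev_diff : ∀ᶠ y in nhds x, HasFDerivAt h (fderiv ℂ h y) y := by
    filter_upwards [hU.mem_nhds hx] with y hy
    exact (hh.differentiableAt (hU.mem_nhds hy)).hasFDerivAt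
  have hsymm : ∀ v w, H v w = H w v := fun v w =>
    second_derivative_symmetric_of_eventually hev_diff hHf v w
  -- first conclusion
  have habs : HasFDerivAt (fun z => ‖h z‖)
      ((absD c).comp ((fderiv ℂ h x).restrictScalars ℝ)) x := by
    have := (hasFDerivAt_cabs hne).comp x (hdx.hasFDerivAt.restrictScalars ℝ)
    exact this
  have hfirst : fderiv ℝ (fun z => ‖h z‖) x = 0 := by
    rw [habs.fderiv, hcrit]
    ext v
    simp
  -- second derivative computation
  set Φ : (Fin n → ℂ) → ((Fin n → ℂ) →L[ℝ] ℝ) :=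
    fun z => (absD (h z)).comp ((fderiv ℂ h z).restrictScalars ℝ) with hΦ_def
  have hev : (fun z => fderiv ℝ (fun y => ‖h y‖) z) =ᶠ[nhds x] Φ := by
    have hcont : ContinuousAt h x := hdx.continuousAt
    filter_upwards [hU.mem_nhds hx, hcont.eventually_ne hne] with z hz hzne
    have hdz : DifferentiableAt ℂ h z := hh.differentiableAt (hU.mem_nhds hz)
    have := (hasFDerivAt_cabs hzne).comp z (hdz.hasFDerivAt.restrictScalars ℝ)
    have h2 : HasFDerivAt (fun y => ‖h y‖)
        ((absD (h z)).comp ((fderiv ℂ h z).restrictScalars ℝ)) z := by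
      exact this
    exact h2.fderiv
  set rS : ((Fin n → ℂ) →L[ℂ] ℂ) →L[ℝ] ((Fin n → ℂ) →L[ℝ] ℂ) :=
    ContinuousLinearMap.restrictScalarsL ℂ (Fin n → ℂ) ℂ ℝ ℝ with hrS_def
  set Hr : (Fin n → ℂ) →L[ℝ] ((Fin n → ℂ) →L[ℝ] ℂ) :=
    rS.comp (H.restrictScalars ℝ) with hHr_def
  set B : (Fin n → ℂ) →L[ℝ] ((Fin n → ℂ) →L[ℝ] ℝ) :=
    ((ContinuousLinearMap.compL ℝ (Fin n → ℂ) ℂ ℝ) (absD c)).comp Hr with hB_def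
  have hΦd : HasFDerivAt Φ B x := by
    have hcc : HasFDerivAt (fun z => absD (h z))
        (fderiv ℝ (fun z => absD (h z)) x) x := by
      exact ((differentiableAt_absD hne).comp x (hdx.restrictScalars ℝ)).hasFDerivAt
    have hdd : HasFDerivAt (fun z => (fderiv ℂ h z).restrictScalars ℝ) Hr x := by
      have h1 : HasFDerivAt (fun z => fderiv ℂ h z) (H.restrictScalars ℝ) x :=
        hHf.restrictScalars ℝ
      exact rS.hasFDerivAt.comp x h1
    have := hcc.clm_comp hdd
    have hzero : (fderiv ℂ h x).restrictScalars ℝ = 0 := by rw [hcrit]; rfl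
    rw [hzero] at this
    simpa [hB_def] using this
  have hBval : fderiv ℝ (fun z => fderiv ℝ (fun y => ‖h y‖) z) x = B := by
    rw [hev.fderiv_eq, hΦd.fderiv]
  have hBvw : ∀ v w : Fin n → ℂ,
      fderiv ℝ (fun z => fderiv ℝ (fun y => ‖h y‖) z) x v w
        = ‖c‖⁻¹ * ((starRingEnd ℂ) c * (H v w)).re := by
    intro v w
    rw [hBval, hB_def]
    simp only [ContinuousLinearMap.coe_comp', Function.comp_apply,
      ContinuousLinearMap.compL_apply, hHr_def, hrS_def,
      ContinuousLinearMap.coe_restrict_scalarsL', ContinuousLinearMap.coe_restrictScalars',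
      absD_apply]
  have hcn : (0:ℝ) < ‖c‖⁻¹ := by
    have : (0:ℝ) < ‖c‖ := norm_pos_iff.mpr hne
    positivity
  have hconj : (starRingEnd ℂ) c ≠ 0 := by
    simpa using hne
  -- nondegeneracy
  have hnd : ∀ v : Fin n → ℂ,
      (∀ w : Fin n → ℂ,
        fderiv ℝ (fun z => fderiv ℝ (fun y => ‖h y‖) z) x v w = 0) → v = 0 := by
    intro v hv
    have hHv : ∀ w, H v w = 0 := by
      intro w
      have h1 := hv w
      have h2 := hv (Complex.I • w)
      rw [hBvw] at h1 h2
      have hre : ((starRingEnd ℂ) c * (H v w)).re = 0 :=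
        (mul_eq_zero.mp h1).resolve_left (ne_of_gt hcn)
      have him : ((starRingEnd ℂ) c * (H v w)).im = 0 := by
        have hIw : H v (Complex.I • w) = Complex.I * H v w := by
          rw [_root_.map_smul]; simp [smul_eq_mul]
        rw [hIw] at h2
        have h3 : ((starRingEnd ℂ) c * (Complex.I * H v w)).re = 0 := by
          rcases mul_eq_zero.mp h2 with h | h
          · exact absurd h (ne_of_gt hcn)
          · exact h
        have : (starRingEnd ℂ) c * (Complex.I * H v w)
            = Complex.I * ((starRingEnd ℂ) c * H v w) := by ring
        rw [this] at h3
        have h4 : c.im * ((H v) w).re + -(c.re * ((H v) w).im) = 0 := by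
          simpa [Complex.mul_re, Complex.I_re, Complex.I_im] using h3
        simp only [Complex.mul_im, Complex.conj_re, Complex.conj_im]
        linarith
      have : (starRingEnd ℂ) c * (H v w) = 0 := by
        exact Complex.ext hre him
      rcases mul_eq_zero.mp this with h | h
      · exact absurd h hconj
      · exact h
    have hv0 : H v = 0 := by ext w; simpa using hHv w
    have : H v = H 0 := by rw [hv0, map_zero]
    exact hHess.injective this
  refine ⟨hfirst, hnd, ?_⟩
  -- the bilinear form Q
  set Q : LinearMap.BilinForm ℂ (Fin n → ℂ) :=
    LinearMap.mk₂ ℂ (fun v w => (starRingEnd ℂ) c * H v w)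
      (fun m₁ m₂ w => by
        simp only [map_add, ContinuousLinearMap.add_apply]; ring)
      (fun a m w => by
        simp only [_root_.map_smul, ContinuousLinearMap.coe_smul', Pi.smul_apply,
          smul_eq_mul]; ring)
      (fun m w₁ w₂ => by simp only [map_add]; ring)
      (fun a m w => by simp only [_root_.map_smul, smul_eq_mul]; ring) with hQ_def
  have hQ_apply : ∀ v w, Q v w = (starRingEnd ℂ) c * H v w := fun v w => by
    rw [hQ_def]; rw [LinearMap.mk₂_apply]
  have hQsymm : Q.IsSymm := by
    refine ⟨fun v w => ?_⟩
    simp only [RingHom.id_apply, hQ_apply, hsymm v w]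
  haveI : Invertible (2:ℂ) := invertibleOfNonzero two_ne_zero
  set m : ℕ := finrank ℂ (Fin n → ℂ) with hm_def
  obtain ⟨e, he⟩ : ∃ e : Basis (Fin m) ℂ (Fin n → ℂ), Q.IsOrthoᵢ e :=
    LinearMap.BilinForm.exists_orthogonal_basis (LinearMap.BilinForm.isSymm_iff.mp hQsymm)
  have hm : m = n := by simp [hm_def]
  -- diagonal entries are nonzero
  have hd : ∀ i, Q (e i) (e i) ≠ 0 := by
    intro i h0
    have hei : ∀ w, Q (e i) w = 0 := by
      have : Q (e i) = 0 := by
        apply e.ext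
        intro j
        rcases eq_or_ne i j with rfl | hij
        · simpa using h0
        · have h1 : Q (e i) (e j) = 0 := he hij
          simpa using h1
      intro w; rw [this]; rfl
    have : ∀ w, H (e i) w = 0 := by
      intro w
      have := hei w
      rw [hQ_apply] at this
      rcases mul_eq_zero.mp this with h' | h'
      · exact absurd h' hconj
      · exact h'
    have h1 : H (e i) = 0 := by ext w; simpa using this w
    have h2 : H (e i) = H 0 := by rw [h1, map_zero]
    exact e.ne_zero i (hHess.injective h2)
  -- normalize
  set s : Fin m → ℂ := fun i => (Q (e i) (e i)) ^ ((1:ℂ)/2) with hs_def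
  have hs2 : ∀ i, s i * s i = Q (e i) (e i) := by
    intro i
    rw [hs_def]
    rw [← Complex.cpow_add _ _ (hd i)]
    norm_num
  have hsne : ∀ i, s i ≠ 0 := by
    intro i h0
    apply hd i
    rw [← hs2 i, h0, mul_zero]
  set u : Fin m → (Fin n → ℂ) := fun i => (s i)⁻¹ • e i with hu_def
  have hQu : ∀ i j, Q (u i) (u j) = if i = j then 1 else 0 := by
    intro i j
    simp only [hu_def, _root_.map_smul, LinearMap.smul_apply, smul_eq_mul]
    rcases eq_or_ne i j with rfl | hij
    · rw [if_pos rfl, ← hs2 i]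
      field_simp
      exact div_self (hsne i)
    · rw [if_neg hij]
      have h0 : Q (e i) (e j) = 0 := he hij
      rw [h0, mul_zero, mul_zero]
  -- u is a ℂ-basis (hence ℂ-linearly independent)
  have hu_li : LinearIndependent ℂ u := by
    have := e.linearIndependent.units_smul (fun i => Units.mk0 (s i)⁻¹ (inv_ne_zero (hsne i)))
    convert this using 1
    funext i; rfl
  have hrinj : Function.Injective fun r : ℝ => r • (1:ℂ) := by
    intro a b hab
    simpa [Complex.real_smul] using hab
  -- real subspaces
  set u' : Fin m → (Fin n → ℂ) := fun i => Complex.I • u i with hu'_def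
  have hu'_li : LinearIndependent ℂ u' := by
    have := hu_li.units_smul (fun _ => Units.mk0 Complex.I Complex.I_ne_zero)
    convert this using 1
    funext i; rfl
  set P : Submodule ℝ (Fin n → ℂ) := Submodule.span ℝ (Set.range u) with hP_def
  set N : Submodule ℝ (Fin n → ℂ) := Submodule.span ℝ (Set.range u') with hN_def
  have hPrank : finrank ℝ P = n := by
    rw [hP_def, finrank_span_eq_card (hu_li.restrict_scalars hrinj)]
    simp [hm]
  have hNrank : finrank ℝ N = n := by
    rw [hN_def, finrank_span_eq_card (hu'_li.restrict_scalars hrinj)]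
    simp [hm]
  -- value of Q on real combinations
  have hQval : ∀ (t : ℂ) (a : Fin m → ℝ),
      Q (∑ i, a i • (t • u i)) (∑ i, a i • (t • u i))
        = (t * t) * ((∑ i, (a i)^2 : ℝ) : ℂ) := by
    intro t a
    have hterm : ∀ (i j : Fin m), Q (a i • (t • u i)) (a j • (t • u j))
        = (a i : ℂ) * (a j : ℂ) * (t * t) * (if i = j then 1 else 0) := by
      intro i j
      simp only [LinearMap.map_smul_of_tower, LinearMap.smul_apply, _root_.map_smul,
        smul_eq_mul, hQu i j, Complex.real_smul]
      ring
    rw [LinearMap.BilinForm.sum_left]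
    have hrow : ∀ i ∈ Finset.univ, Q (a i • (t • u i)) (∑ j, a j • (t • u j))
        = (t * t) * ((a i : ℂ) * (a i : ℂ)) := by
      intro i _
      rw [LinearMap.BilinForm.sum_right]
      rw [Finset.sum_congr rfl (fun j _ => hterm i j)]
      have : ∀ j ∈ Finset.univ, (a i : ℂ) * (a j : ℂ) * (t * t) * (if i = j then 1 else 0)
          = (if i = j then (a i : ℂ) * (a j : ℂ) * (t * t) else 0) := by
        intro j _
        split <;> simp
      rw [Finset.sum_congr rfl this, Finset.sum_ite_eq Finset.univ i
        (fun j => (a i : ℂ) * (a j : ℂ) * (t * t))]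
      simp only [Finset.mem_univ, if_true]
      ring
    rw [Finset.sum_congr rfl hrow, ← Finset.mul_sum]
    congr 1
    push_cast
    apply Finset.sum_congr rfl
    intro i _
    ring
  -- positivity and negativity
  have hBQ : ∀ v : Fin n → ℂ,
      fderiv ℝ (fun z => fderiv ℝ (fun y => ‖h y‖) z) x v v
        = ‖c‖⁻¹ * (Q v v).re := by
    intro v
    rw [hBvw v v, hQ_apply]
  have hpos : ∀ v ∈ P, v ≠ 0 →
      0 < fderiv ℝ (fun z => fderiv ℝ (fun y => ‖h y‖) z) x v v := by
    intro v hvP hv0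
    rw [hBQ]
    obtain ⟨a, ha⟩ := (Submodule.mem_span_range_iff_exists_fun ℝ).mp hvP
    have hsum : ∑ i, a i • ((1:ℂ) • u i) = v := by simpa using ha
    have hQv : Q v v = ((∑ i, (a i)^2 : ℝ) : ℂ) := by
      rw [← hsum, hQval 1 a]; simp
    rw [hQv]
    have hane : ∃ i, a i ≠ 0 := by
      by_contra hall
      push_neg at hall
      apply hv0
      rw [← hsum]
      simp [hall]
    obtain ⟨i, hi⟩ := hane
    have hsum_pos : 0 < ∑ i, (a i)^2 := by
      apply Finset.sum_pos' (fun j _ => sq_nonneg _)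
      exact ⟨i, Finset.mem_univ i, by positivity⟩
    rw [Complex.ofReal_re]
    exact mul_pos hcn hsum_pos
  have hneg : ∀ v ∈ N, v ≠ 0 →
      fderiv ℝ (fun z => fderiv ℝ (fun y => ‖h y‖) z) x v v < 0 := by
    intro v hvN hv0
    rw [hBQ]
    obtain ⟨a, ha⟩ := (Submodule.mem_span_range_iff_exists_fun ℝ).mp hvN
    have hsum : ∑ i, a i • (Complex.I • u i) = v := by simpa [hu'_def] using ha
    have hQv : Q v v = -((∑ i, (a i)^2 : ℝ) : ℂ) := by
      rw [← hsum, hQval Complex.I a, Complex.I_mul_I]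
      ring
    rw [hQv]
    have hane : ∃ i, a i ≠ 0 := by
      by_contra hall
      push_neg at hall
      apply hv0
      rw [← hsum]
      simp [hall]
    obtain ⟨i, hi⟩ := hane
    have hsum_pos : 0 < ∑ i, (a i)^2 := by
      apply Finset.sum_pos' (fun j _ => sq_nonneg _)
      exact ⟨i, Finset.mem_univ i, by positivity⟩
    have hlt : ‖c‖⁻¹ * (-(∑ i, (a i)^2 : ℝ)) < 0 := by
      apply mul_neg_of_pos_of_neg hcn
      linarith
    calc ‖c‖⁻¹ * (-((∑ i, (a i)^2 : ℝ) : ℂ)).re = ‖c‖⁻¹ * (-(∑ i, (a i)^2 : ℝ)) := by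
          rw [← Complex.ofReal_neg, Complex.ofReal_re]
      _ < 0 := hlt
  -- disjointness
  have hdisj : Disjoint P N := by
    rw [Submodule.disjoint_def]
    intro v hvP hvN
    by_contra hv0
    have h1 := hpos v hvP hv0
    have h2 := hneg v hvN hv0
    linarith
  have htot : finrank ℝ (Fin n → ℂ) = 2 * n := by
    rw [finrank_pi_fintype ℝ]
    simp [Complex.finrank_real_complex, Finset.sum_const, mul_comm]
  have hcompl : IsCompl P N := by
    refine ⟨hdisj, ?_⟩
    rw [codisjoint_iff]
    apply Submodule.eq_top_of_finrank_eq
    have hinf : P ⊓ N = ⊥ := disjoint_iff.mp hdisj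
    have := Submodule.finrank_sup_add_finrank_inf_eq P N
    rw [hinf] at this
    simp only [finrank_bot, add_zero] at this
    rw [htot, this, hPrank, hNrank]
    ring
  exact ⟨P, N, hPrank, hNrank, hcompl, hpos, hneg⟩
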